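/- Let X, Y be metric spaces, Y coarsely geodesic and coarsely proper, and let X∗Y = {(x,y) : |d(p,x) − d(q,y)| ≤ R} be the asymptotic product. If (U_i)_{i=1..n} is a coarse cover of X and (V_j)_{j=1..m} is a coarse cover of Y, then ((U_i × V_j) ∩ (X∗Y))_{i,j} is a coarse cover of X∗Y. -/
import Mathlib


open Set Bornology Metric

/-- `E ⊆ X × X` is an entourage if `sup_{(x,y) ∈ E} d(x,y) < ∞`. -/
def IsEnt {X : Type*} [PseudoMetricSpace X] (E : Set (X × X)) : Prop :=
  ∃ C : ℝ, ∀ p ∈ E, dist p.1 p.2 ≤ C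

/-- `E[A] = {y : ∃ a ∈ A, (a,y) ∈ E}`. -/
def entImg {X : Type*} [PseudoMetricSpace X] (E : Set (X × X)) (A : Set X) : Set X :=
  {y | ∃ a ∈ A, (a, y) ∈ E}

/-- `A` and `B` are not coarsely disjoint: some entourage `E` has `E[A] ∩ E[B]` unbounded. -/
def NotCD {X : Type*} [PseudoMetricSpace X] (A B : Set X) : Prop :=
  ∃ E : Set (X × X), IsEnt E ∧ ¬ IsBounded (entImg E A ∩ entImg E B)

/-- `A` and `B` are coarsely disjoint: every entourage `E` has `E[A] ∩ E[B]` bounded. -/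
def CD {X : Type*} [PseudoMetricSpace X] (A B : Set X) : Prop :=
  ∀ E : Set (X × X), IsEnt E → IsBounded (entImg E A ∩ entImg E B)

/-- Coarsely uniform: `f × f` maps entourages to entourages. -/
def CUnif {X Y : Type*} [PseudoMetricSpace X] [PseudoMetricSpace Y] (f : X → Y) : Prop :=
  ∀ E : Set (X × X), IsEnt E → IsEnt ((fun p : X × X => (f p.1, f p.2)) '' E)

/-- Coarsely proper: preimages of bounded sets are bounded. -/
def CProper {X Y : Type*} [PseudoMetricSpace X] [PseudoMetricSpace Y] (f : X → Y) : Prop :=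
  ∀ B : Set Y, IsBounded B → IsBounded (f ⁻¹' B)

/-- A coarse map is coarsely uniform and coarsely proper. -/
def Coarse {X Y : Type*} [PseudoMetricSpace X] [PseudoMetricSpace Y] (f : X → Y) : Prop :=
  CUnif f ∧ CProper f

/-- Coarsely injective: `(f × f)⁻¹` of any entourage is an entourage. -/
def CInj {X Y : Type*} [PseudoMetricSpace X] [PseudoMetricSpace Y] (f : X → Y) : Prop :=
  ∀ F : Set (Y × Y), IsEnt F → IsEnt ((fun p : X × X => (f p.1, f p.2)) ⁻¹' F)

/-- A coarse ultrafilter on a metric space. -/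
structure CUF (X : Type*) [PseudoMetricSpace X] where
  sets : Set (Set X)
  pairClose : ∀ A ∈ sets, ∀ B ∈ sets, NotCD A B
  split : ∀ A B : Set X, A ∪ B ∈ sets → A ∈ sets ∨ B ∈ sets
  univ_mem : Set.univ ∈ sets

/-- Pushforward system of sets of a coarse ultrafilter along a map. -/
def push {X Y : Type*} [PseudoMetricSpace X] [PseudoMetricSpace Y] (f : X → Y) (F : CUF X) :
    Set (Set Y) :=
  {A : Set Y | f ⁻¹' A ∈ F.sets}

/-- Asymptotically alike coarse ultrafilters. -/
def AAlike {X : Type*} [PseudoMetricSpace X] (F G : CUF X) : Prop :=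
  ∀ A ∈ F.sets, ∀ B ∈ G.sets, NotCD A B

/-- Asymptotically alike, on raw systems of subsets. -/
def AAlikeS {X : Type*} [PseudoMetricSpace X] (S T : Set (Set X)) : Prop :=
  ∀ A ∈ S, ∀ B ∈ T, NotCD A B

/-- `c`-coarsely geodesic: any two points are joined by a `c`-path. -/
def CGeodesicWith {Y : Type*} [MetricSpace Y] (c : ℝ) : Prop :=
  ∀ x y : Y, ∃ (n : ℕ) (p : ℕ → Y), p 0 = x ∧ p n = y ∧
    ∀ i < n, dist (p i) (p (i + 1)) ≤ c

/-- Coarsely geodesic metric space. -/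
def CGeodesic (Y : Type*) [MetricSpace Y] : Prop :=
  ∃ c > (0 : ℝ), CGeodesicWith (Y := Y) c

/-- Coarsely proper: for some scale `r`, every bounded set is covered by finitely many
`r`-balls. -/
def CProperSpace (Y : Type*) [MetricSpace Y] : Prop :=
  ∃ r > (0 : ℝ), ∀ B : Set Y, IsBounded B → ∃ s : Finset Y, B ⊆ ⋃ y ∈ s, Metric.ball y r

/-- The asymptotic product `X ∗ Y` of two metric spaces, relative to base points
`p, q` and a constant `R`. -/
def asymProd {X Y : Type*} [MetricSpace X] [MetricSpace Y] (p : X) (q : Y) (R : ℝ) :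
    Set (X × Y) :=
  {z : X × Y | |dist p z.1 - dist q z.2| ≤ R}

/-- A finite family coarsely covers `Z` if for every entourage `E`, the intersection of
the `E`-thickenings of the complements is bounded. -/
def CCover {Z : Type*} [PseudoMetricSpace Z] {ι : Type*} (W : ι → Set Z) : Prop :=
  ∀ E : Set (Z × Z), IsEnt E → IsBounded (⋂ i, entImg E (W i)ᶜ)

lemma aux_bounded_left {X Y : Type*} [MetricSpace X] [MetricSpace Y]
    (p : X) (q : Y) (R : ℝ) (S : Set X) (D : ℝ)
    (hD : ∀ a ∈ S, ∀ b ∈ S, dist a b ≤ D) :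
    IsBounded {z : asymProd p q R | (z : X × Y).1 ∈ S} := by
  rcases Set.eq_empty_or_nonempty {z : asymProd p q R | (z : X × Y).1 ∈ S} with h | ⟨z₀, hz₀⟩
  · rw [h]; exact isBounded_empty
  rw [Metric.isBounded_iff]
  refine ⟨max D (2 * (dist p (z₀ : X × Y).1 + D + R)), fun z hz w hw => ?_⟩
  have hq : ∀ u : asymProd p q R, (u : X × Y).1 ∈ S →
      dist q (u : X × Y).2 ≤ dist p (z₀ : X × Y).1 + D + R := by
    intro u hu
    have hprop := u.2
    simp only [asymProd, Set.mem_setOf_eq] at hprop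
    have h1 := (abs_le.1 hprop).1
    have h2 : dist p (u : X × Y).1 ≤ dist p (z₀ : X × Y).1 + dist (z₀ : X × Y).1 (u : X × Y).1 :=
      dist_triangle _ _ _
    have h3 := hD _ hz₀ _ hu
    linarith
  have hzz := hq z hz
  have hww := hq w hw
  rw [Subtype.dist_eq, Prod.dist_eq]
  refine max_le (le_trans (hD _ hz _ hw) (le_max_left _ _)) (le_trans ?_ (le_max_right _ _))
  have := dist_triangle (z : X × Y).2 q (w : X × Y).2
  rw [dist_comm (z : X × Y).2 q] at this
  linarith

lemma aux_bounded_right {X Y : Type*} [MetricSpace X] [MetricSpace Y]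
    (p : X) (q : Y) (R : ℝ) (S : Set Y) (D : ℝ)
    (hD : ∀ a ∈ S, ∀ b ∈ S, dist a b ≤ D) :
    IsBounded {z : asymProd p q R | (z : X × Y).2 ∈ S} := by
  rcases Set.eq_empty_or_nonempty {z : asymProd p q R | (z : X × Y).2 ∈ S} with h | ⟨z₀, hz₀⟩
  · rw [h]; exact isBounded_empty
  rw [Metric.isBounded_iff]
  refine ⟨max D (2 * (dist q (z₀ : X × Y).2 + D + R)), fun z hz w hw => ?_⟩
  have hp : ∀ u : asymProd p q R, (u : X × Y).2 ∈ S →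
      dist p (u : X × Y).1 ≤ dist q (z₀ : X × Y).2 + D + R := by
    intro u hu
    have hprop := u.2
    simp only [asymProd, Set.mem_setOf_eq] at hprop
    have h1 := (abs_le.1 hprop).2
    have h2 : dist q (u : X × Y).2 ≤ dist q (z₀ : X × Y).2 + dist (z₀ : X × Y).2 (u : X × Y).2 :=
      dist_triangle _ _ _
    have h3 := hD _ hz₀ _ hu
    linarith
  have hzz := hp z hz
  have hww := hp w hw
  rw [Subtype.dist_eq, Prod.dist_eq]
  refine max_le (le_trans ?_ (le_max_right _ _)) (le_trans (hD _ hz _ hw) (le_max_left _ _))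
  have := dist_triangle (z : X × Y).1 p (w : X × Y).1
  rw [dist_comm (z : X × Y).1 p] at this
  linarith

/-- coarse covers of the factors induce a coarse cover of the asymptotic
product. -/
theorem stmt11 {X Y : Type*} [MetricSpace X] [MetricSpace Y]
    (hYg : CGeodesic Y) (hYp : CProperSpace Y)
    (p : X) (q : Y) (R : ℝ) (hR : 0 ≤ R)
    {n m : ℕ} (U : Fin n → Set X) (V : Fin m → Set Y)
    (hU : CCover U) (hV : CCover V) :
    CCover (fun ij : Fin n × Fin m =>
      {z : asymProd p q R | (z : X × Y).1 ∈ U ij.1 ∧ (z : X × Y).2 ∈ V ij.2}) := by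
  intro E hE
  obtain ⟨C, hC⟩ := hE
  have hEX : IsEnt {a : X × X | dist a.1 a.2 ≤ C} := ⟨C, fun r hr => hr⟩
  have hEY : IsEnt {a : Y × Y | dist a.1 a.2 ≤ C} := ⟨C, fun r hr => hr⟩
  have hSX := hU _ hEX
  have hSY := hV _ hEY
  rw [Metric.isBounded_iff] at hSX hSY
  obtain ⟨D1, hD1⟩ := hSX
  obtain ⟨D2, hD2⟩ := hSY
  set SX := ⋂ i, entImg {a : X × X | dist a.1 a.2 ≤ C} (U i)ᶜ with hSXdef
  set SY := ⋂ j, entImg {a : Y × Y | dist a.1 a.2 ≤ C} (V j)ᶜ with hSYdef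
  have hsub : (⋂ ij : Fin n × Fin m, entImg E
      {z : asymProd p q R | (z : X × Y).1 ∈ U ij.1 ∧ (z : X × Y).2 ∈ V ij.2}ᶜ)
      ⊆ {z : asymProd p q R | (z : X × Y).1 ∈ SX} ∪
        {z : asymProd p q R | (z : X × Y).2 ∈ SY} := by
    intro z hz
    simp only [Set.mem_iInter] at hz
    have key : ∀ ij : Fin n × Fin m, ∃ w : asymProd p q R,
        (¬((w : X × Y).1 ∈ U ij.1 ∧ (w : X × Y).2 ∈ V ij.2)) ∧
        dist (w : X × Y).1 (z : X × Y).1 ≤ C ∧ dist (w : X × Y).2 (z : X × Y).2 ≤ C := by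
      intro ij
      obtain ⟨w, hw1, hw2⟩ := hz ij
      have hd := hC _ hw2
      simp only at hd
      rw [Subtype.dist_eq, Prod.dist_eq] at hd
      exact ⟨w, hw1, le_trans (le_max_left _ _) hd, le_trans (le_max_right _ _) hd⟩
    by_cases hcase : ∀ i : Fin n, ∃ w : asymProd p q R,
        (w : X × Y).1 ∉ U i ∧ dist (w : X × Y).1 (z : X × Y).1 ≤ C
    · left
      refine Set.mem_iInter.2 fun i => ?_
      obtain ⟨w, hw1, hw2⟩ := hcase i
      exact ⟨(w : X × Y).1, hw1, hw2⟩
    · right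
      push_neg at hcase
      obtain ⟨i, hi⟩ := hcase
      refine Set.mem_iInter.2 fun j => ?_
      obtain ⟨w, hw1, hw2, hw3⟩ := key (i, j)
      have hwU : (w : X × Y).1 ∈ U i := by
        by_contra h
        exact absurd hw2 (not_le.2 (hi w h))
      have hwV : (w : X × Y).2 ∉ V j := fun hv => hw1 ⟨hwU, hv⟩
      exact ⟨(w : X × Y).2, hwV, hw3⟩
  exact ((aux_bounded_left p q R SX D1 hD1).union
    (aux_bounded_right p q R SY D2 hD2)).subset hsub
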